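/- The sequence defined by t₀ = 1 and t_{k+1} = (1 + √(1 + 4t_k²))/2 satisfies t_k ≥ (k+2)/2 for all k ≥ 0. -/
import Mathlib

/-- The FISTA momentum sequence satisfies `t_k ≥ (k+2)/2`. -/
theorem fista_t_lower_bound (t : ℕ → ℝ) (h0 : t 0 = 1)
    (hrec : ∀ k, t (k+1) = (1 + Real.sqrt (1 + 4 * (t k)^2)) / 2) :
    ∀ k : ℕ, ((k : ℝ) + 2) / 2 ≤ t k := by
  intro k
  induction k with
  | zero => norm_num [h0]
  | succ n ih =>
    have htn : (0:ℝ) ≤ t n := le_trans (by positivity) ih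
    have h1 : Real.sqrt ((2 * t n)^2) ≤ Real.sqrt (1 + 4 * (t n)^2) := by
      apply Real.sqrt_le_sqrt; ring_nf; nlinarith
    rw [Real.sqrt_sq (by positivity)] at h1
    rw [hrec]
    push_cast
    nlinarith
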